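/- Let a > b > 0 and set p² = a²+b², r² = a²−b². Let x₁,x₂,y₁,y₂,z₁,z₂,w₁,w₂ be complex numbers and w₃ a real number with x₂ = conj(x₁), y₂ = conj(y₁), z₂ = conj(z₁), w₂ = conj(w₁), w₁w₂ ≠ 0, satisfying: z₁² + x₁y₂ = r², z₂² + x₂y₁ = r², x₁x₂ + y₁y₂ + 2z₁z₂ = 2p²; R₁ = 0 and R₂ = 0 (where R₁, R₂ are as defined below); and S := −(y₂w₁ + x₁w₂ + z₁w₃)/(2w₁) = s with s a nonzero real number, T := −2s·w₁w₂ + x₁x₂ + z₁z₂ = τ with τ real. Then the integrals take the values H = (p² − τ)/(2s) + s, K = (τ² − 2p²τ + r⁴)/(4s²) + τ, and G = (p⁴ − r⁴)/(4s) + (p² − τ)s/2, where H = w₁w₂ + w₃²/2 − (y₁+y₂)/2, K = (w₁² + x₁)(w₂² + x₂), and G = (1/4)(x₁w₂ + y₂w₁ + z₁w₃)(x₂w₁ + y₁w₂ + z₂w₃) + (1/2)w₃·M_γ − b²α₁ − a²β₂ with M_γ = 2ω₁(α₂β₃ − α₃β₂) + 2ω₂(α₃β₁ − α₁β₃) + ω₃(α₁β₂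 − α₂β₁) expressed through the real variables ω₁ = Re w₁, ω₂ = Im w₁, ω₃ = w₃, α₁ = Re(x₁+y₁)/2, etc., recovered from the complex coordinates. -/

import Mathlib

/-- On the invariant set `𝔒` (given by `R₁ = 0`, `R₂ = 0`) with partial integral values
`S = s ≠ 0`, `T = τ`, the integrals `H`, `K`, `G` take the values
`h = (p² - τ)/(2s) + s`, `k = (τ² - 2p²τ + r⁴)/(4s²) + τ`,
`g = (p⁴ - r⁴)/(4s) + (p² - τ)s/2`, where `p² = a² + b²`, `r² = a² - b²`. -/
theorem stmt_7
    (a b s τ : ℝ) (hab : b < a) (hb : 0 < b) (hs : s ≠ 0)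
    (x₁ x₂ y₁ y₂ z₁ z₂ w₁ w₂ : ℂ) (w₃ : ℝ)
    (hx₂ : x₂ = starRingEnd ℂ x₁) (hy₂ : y₂ = starRingEnd ℂ y₁)
    (hz₂ : z₂ = starRingEnd ℂ z₁) (hw₂ : w₂ = starRingEnd ℂ w₁)
    (hw : w₁ * w₂ ≠ 0)
    (hgeom₁ : z₁ ^ 2 + x₁ * y₂ = ((a ^ 2 - b ^ 2 : ℝ) : ℂ))
    (hgeom₂ : z₂ ^ 2 + x₂ * y₁ = ((a ^ 2 - b ^ 2 : ℝ) : ℂ))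
    (hgeom₃ : x₁ * x₂ + y₁ * y₂ + 2 * z₁ * z₂ = ((2 * (a ^ 2 + b ^ 2) : ℝ) : ℂ))
    (hR₁ : (w₂ * x₁ + w₁ * y₂ + w₃ * z₁) / w₁ - (w₁ * x₂ + w₂ * y₁ + w₃ * z₂) / w₂ = 0)
    (hR₂ : (w₂ * z₁ + w₁ * z₂) * (w₃ : ℂ) ^ 2 +
      (w₂ * z₁ ^ 2 / w₁ + w₁ * z₂ ^ 2 / w₂ + w₁ * w₂ * (y₁ + y₂) +
        x₁ * w₂ ^ 2 + x₂ * w₁ ^ 2) * w₃ +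
      w₂ ^ 2 * x₁ * z₁ / w₁ + w₁ ^ 2 * x₂ * z₂ / w₂ +
      x₁ * z₂ * w₂ + x₂ * z₁ * w₁ + (w₁ * z₂ - w₂ * z₁) * (y₁ - y₂) = 0)
    (hS : -(y₂ * w₁ + x₁ * w₂ + z₁ * w₃) / (2 * w₁) = (s : ℂ))
    (hT : -(2 * s) * (w₁ * w₂) + x₁ * x₂ + z₁ * z₂ = (τ : ℂ))
    (ω₁ ω₂ ω₃ α₁ α₂ α₃ β₁ β₂ β₃ : ℝ)
    (hω₁ : ω₁ = w₁.re) (hω₂ : ω₂ = w₁.im) (hω₃ : ω₃ = w₃)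
    (hα₁ : α₁ = ((x₁ + y₁) / 2).re) (hα₂ : α₂ = ((x₁ + y₁) / 2).im)
    (hα₃ : α₃ = z₁.re)
    (hβ₁ : β₁ = -((y₁ - x₁) / 2).im) (hβ₂ : β₂ = ((y₁ - x₁) / 2).re)
    (hβ₃ : β₃ = z₁.im)
    (Mγ : ℝ)
    (hMγ : Mγ = 2 * ω₁ * (α₂ * β₃ - α₃ * β₂) + 2 * ω₂ * (α₃ * β₁ - α₁ * β₃) +
      ω₃ * (α₁ * β₂ - α₂ * β₁)) :
    w₁ * w₂ + (w₃ : ℂ) ^ 2 / 2 - (y₁ + y₂) / 2 =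
      ((((a ^ 2 + b ^ 2) - τ) / (2 * s) + s : ℝ) : ℂ) ∧
    (w₁ ^ 2 + x₁) * (w₂ ^ 2 + x₂) =
      (((τ ^ 2 - 2 * (a ^ 2 + b ^ 2) * τ + (a ^ 2 - b ^ 2) ^ 2) / (4 * s ^ 2) + τ : ℝ) : ℂ) ∧
    (1 / 4 : ℂ) * ((x₁ * w₂ + y₂ * w₁ + z₁ * w₃) * (x₂ * w₁ + y₁ * w₂ + z₂ * w₃)) +
      ((1 / 2 * w₃ * Mγ - b ^ 2 * α₁ - a ^ 2 * β₂ : ℝ) : ℂ) =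
      ((((a ^ 2 + b ^ 2) ^ 2 - (a ^ 2 - b ^ 2) ^ 2) / (4 * s) +
        ((a ^ 2 + b ^ 2) - τ) * s / 2 : ℝ) : ℂ) := by

  have hw₁ : w₁ ≠ 0 := left_ne_zero_of_mul hw
  have hw₂0 : w₂ ≠ 0 := right_ne_zero_of_mul hw
  have hsC : (s:ℂ) ≠ 0 := Complex.ofReal_ne_zero.mpr hs
  have h4 : x₁ * w₂ + y₂ * w₁ + z₁ * (w₃:ℂ) + 2*(s:ℂ)*w₁ = 0 := by
    rw [div_eq_iff (mul_ne_zero two_ne_zero hw₁)] at hS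
    linear_combination -hS
  have h5 : x₂ * w₁ + y₁ * w₂ + z₂ * (w₃:ℂ) + 2*(s:ℂ)*w₂ = 0 := by
    have h := congrArg (starRingEnd ℂ) h4
    simp only [map_add, map_mul, map_zero, map_ofNat, Complex.conj_ofReal] at h
    rw [hw₂, hy₂] at h
    rw [hx₂, hz₂, hw₂]
    simp only [Complex.conj_conj] at h
    linear_combination h
  have hg1c : z₁^2 + x₁*y₂ = (a:ℂ)^2 - (b:ℂ)^2 := by
    push_cast at hgeom₁; linear_combination hgeom₁
  have hg2c : z₂^2 + x₂*y₁ = (a:ℂ)^2 - (b:ℂ)^2 := by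
    push_cast at hgeom₂; linear_combination hgeom₂
  have hg3c : x₁*x₂ + y₁*y₂ + 2*z₁*z₂ = 2*((a:ℂ)^2 + (b:ℂ)^2) := by
    push_cast at hgeom₃; linear_combination hgeom₃
  field_simp at hR₂
  have hFW : (w₁*w₂)^2 * (x₁*z₂*w₂ + x₂*z₁*w₁ + z₁*z₂*(w₃:ℂ) - 2*(s:ℂ)*w₁*w₂*(w₃:ℂ)) = 0 := by
    linear_combination (1/2:ℂ)*(w₁*w₂)*hR₂ - ((1/2:ℂ)*w₁*w₂*(w₁*w₂^2*(w₃:ℂ) - z₂*w₁*w₂ + z₁*w₂^2))*h4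
      - ((1/2:ℂ)*w₁*w₂*(w₁^2*w₂*(w₃:ℂ) + z₂*w₁^2 - z₁*w₁*w₂))*h5
  have hF : x₁*z₂*w₂ + x₂*z₁*w₁ + z₁*z₂*(w₃:ℂ) - 2*(s:ℂ)*w₁*w₂*(w₃:ℂ) = 0 :=
    (mul_eq_zero.mp hFW).resolve_left (pow_ne_zero 2 hw)
  -- key identities
  have key1W : w₁*w₂ * (2*(s:ℂ)*(w₁*w₂) + (s:ℂ)*(w₃:ℂ)^2 - (s:ℂ)*(y₁+y₂)
      - ((a:ℂ)^2+(b:ℂ)^2) + (τ:ℂ) - 2*(s:ℂ)^2) = 0 := by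
    linear_combination ((1/2)*x₂*w₁ + (1/2)*z₂*(w₃:ℂ)) * h4 +
        ((-1/2)*y₂*w₁ + -1*w₁*(s:ℂ)) * h5 +
        (-1*w₁*w₂) * hT +
        ((1/2)*w₁*w₂) * hg3c +
        ((-1/2)*(w₃:ℂ)) * hF
  have key1 := (mul_eq_zero.mp key1W).resolve_left hw
  have key2W : w₁*w₂ * (4*(s:ℂ)^2*(w₁^2+x₁)*(w₂^2+x₂) - (τ:ℂ)^2
      + 2*((a:ℂ)^2+(b:ℂ)^2)*(τ:ℂ) - ((a:ℂ)^2-(b:ℂ)^2)^2 - 4*(s:ℂ)^2*(τ:ℂ)) = 0 := by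
    linear_combination (2*x₂*w₁^2*w₂*(s:ℂ) + 2*z₂*w₁*w₂*(w₃:ℂ)*(s:ℂ) + 4*w₁*w₂^2*(s:ℂ)^2 + -1*x₁*x₂^2*w₁ + -1*x₂*z₁*z₂*w₁ + -1*x₁^2*y₂*w₂ + -1*x₁*z₁^2*w₂ + -1*x₁*x₂*z₂*(w₃:ℂ) + -1*z₁*z₂^2*(w₃:ℂ) + -2*x₁*x₂*w₂*(s:ℂ) + -2*z₁*z₂*w₂*(s:ℂ)) * h4 +
        (-2*y₂*w₁^2*w₂*(s:ℂ) + 1*x₁*x₂*y₂*w₁ + -1*x₂*z₁^2*w₁ + 1*y₂*z₁*z₂*w₁ + 1*x₁^2*x₂*w₂ + 1*x₁*x₂*z₁*(w₃:ℂ) + 2*x₁*x₂*w₁*(s:ℂ)) * h5 +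
        (-2*w₁^2*w₂^2*(s:ℂ) + 1*x₁*x₂*w₁*w₂ + 1*z₁*z₂*w₁*w₂ + 4*w₁*w₂*(s:ℂ)^2 + 1*w₁*w₂*(τ:ℂ) + -2*w₁*w₂*(a:ℂ)^2 + -2*w₁*w₂*(b:ℂ)^2) * hT +
        ((1/4)*x₁*x₂*w₁*w₂ + 1*x₁*y₂*w₁*w₂ + (1/4)*y₁*y₂*w₁*w₂ + (1/2)*z₁*z₂*w₁*w₂ + 1*x₁^2*w₂^2 + 1*x₁*z₁*w₂*(w₃:ℂ) + 2*x₁*w₁*w₂*(s:ℂ) + (1/2)*w₁*w₂*(a:ℂ)^2 + (-3/2)*w₁*w₂*(b:ℂ)^2) * hg1c +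
        (2*w₁^2*w₂^2*(s:ℂ) + -1*x₁*x₂*w₁*w₂ + (-1/4)*x₁*y₂*w₁*w₂ + (-1/4)*z₁^2*w₁*w₂ + -1*z₁*z₂*w₁*w₂ + (1/4)*w₁*w₂*(a:ℂ)^2 + (-1/4)*w₁*w₂*(b:ℂ)^2) * hg3c +
        (1*z₁^2*w₁*w₂ + -1*x₁^2*w₂^2 + -1*x₁*z₁*w₂*(w₃:ℂ) + -2*x₁*w₁*w₂*(s:ℂ)) * hg2c +
        (1*x₂*z₁*w₁ + 1*x₁*z₂*w₂ + 1*z₁*z₂*(w₃:ℂ) + 2*z₂*w₁*(s:ℂ) + 2*z₁*w₂*(s:ℂ)) * hF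
  have key2 := (mul_eq_zero.mp key2W).resolve_left hw
  have key3W : (w₁*w₂)^2 * (4*(s:ℂ)*((s:ℂ)^2*(w₁*w₂))
      + 4*(s:ℂ)*((w₃:ℂ)*(2*w₁*(x₂*z₁-y₂*z₂) + 2*w₂*(x₁*z₂-y₁*z₁) + (w₃:ℂ)*(y₁*y₂-x₁*x₂)))/8
      - 4*(s:ℂ)*(((a:ℂ)^2+(b:ℂ)^2)*(y₁+y₂) - ((a:ℂ)^2-(b:ℂ)^2)*(x₁+x₂))/4
      - (((a:ℂ)^2+(b:ℂ)^2)^2 - ((a:ℂ)^2-(b:ℂ)^2)^2)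
      - 2*(s:ℂ)^2*(((a:ℂ)^2+(b:ℂ)^2) - (τ:ℂ))) = 0 := by
    linear_combination (-1*z₂*w₁^2*w₂^2*(w₃:ℂ)*(s:ℂ) + (-1/2)*x₂*w₁^2*w₂*(w₃:ℂ)^2*(s:ℂ) + (-1/2)*z₂*w₁*w₂*(w₃:ℂ)^3*(s:ℂ) + -1*w₁*w₂^2*(w₃:ℂ)^2*(s:ℂ)^2 + (-1/4)*x₂^2*y₂*w₁^3 + (3/4)*x₁*x₂^2*w₁^2*w₂ + 1*x₂*z₁*z₂*w₁^2*w₂ + 1*x₁^2*y₂*w₁*w₂^2 + 1*x₁*z₁^2*w₁*w₂^2 + (1/4)*x₂^2*z₁*w₁^2*(w₃:ℂ) + (-1/2)*x₂*y₂*z₂*w₁^2*(w₃:ℂ) + 1*x₁*x₂*z₂*w₁*w₂*(w₃:ℂ) + 1*z₁*z₂^2*w₁*w₂*(w₃:ℂ) + (1/2)*x₂*z₁*z₂*w₁*(w₃:ℂ)^2 + (-1/4)*y₂*z₂^2*w₁*(w₃:ℂ)^2 + (1/4)*x₁*z₂^2*w₂*(w₃:ℂ)^2 + (1/4)*z₁*z₂^2*(w₃:ℂ)^3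 + (-1/2)*x₂*y₂*w₁^2*w₂*(s:ℂ) + 2*x₁*x₂*w₁*w₂^2*(s:ℂ) + 1*z₁*z₂*w₁*w₂^2*(s:ℂ) + (1/2)*x₂*z₁*w₁*w₂*(w₃:ℂ)*(s:ℂ) + (-1/2)*y₂*z₂*w₁*w₂*(w₃:ℂ)*(s:ℂ) + (1/2)*x₁*z₂*w₂^2*(w₃:ℂ)*(s:ℂ) + (1/2)*z₁*z₂*w₂*(w₃:ℂ)^2*(s:ℂ)) * h4 +
        (-1*z₁*w₁^2*w₂^2*(w₃:ℂ)*(s:ℂ) + (1/2)*y₂*w₁^2*w₂*(w₃:ℂ)^2*(s:ℂ) + (1/4)*x₂*y₂^2*w₁^3 + (-1/2)*x₁*x₂*y₂*w₁^2*w₂ + (-1/4)*y₁*y₂^2*w₁^2*w₂ + 1*x₂*z₁^2*w₁^2*w₂ + -1*y₂*z₁*z₂*w₁^2*w₂ + -1*x₁^2*x₂*w₁*w₂^2 + (1/4)*y₂^2*z₂*w₁^2*(w₃:ℂ) + -1*x₁*x₂*z₁*w₁*w₂*(w₃:ℂ) + (1/2)*x₂*y₂*w₁^3*(s:ℂ)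 + (-3/2)*x₁*x₂*w₁^2*w₂*(s:ℂ) + (-1/2)*y₁*y₂*w₁^2*w₂*(s:ℂ) + -1*z₁*z₂*w₁^2*w₂*(s:ℂ) + (1/2)*y₂*z₂*w₁^2*(w₃:ℂ)*(s:ℂ)) * h5 +
        (-2*w₁^2*w₂^2*(s:ℂ)^2) * hT +
        ((-1/2)*x₁*x₂*w₁^2*w₂^2 + -1*x₁*y₂*w₁^2*w₂^2 + (-1/2)*y₁*y₂*w₁^2*w₂^2 + -1*z₁*z₂*w₁^2*w₂^2 + -1*x₁^2*w₁*w₂^3 + -1*x₁*z₁*w₁*w₂^2*(w₃:ℂ) + -2*x₁*w₁^2*w₂^2*(s:ℂ) + -1*x₂*w₁^2*w₂^2*(s:ℂ) + 2*w₁^2*w₂^2*(b:ℂ)^2) * hg1c +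
        ((1/4)*x₁*x₂*w₁^2*w₂^2 + (1/2)*x₁*y₂*w₁^2*w₂^2 + (1/4)*y₁*y₂*w₁^2*w₂^2 + (1/2)*z₁^2*w₁^2*w₂^2 + (1/2)*z₁*z₂*w₁^2*w₂^2 + (1/2)*y₁*w₁^2*w₂^2*(s:ℂ) + (1/2)*y₂*w₁^2*w₂^2*(s:ℂ) + 1*w₁^2*w₂^2*(s:ℂ)^2 + 1*w₁^2*w₂^2*(b:ℂ)^2) * hg3c +
        (-1*z₁^2*w₁^2*w₂^2 + 1*x₁^2*w₁*w₂^3 + 1*x₁*z₁*w₁*w₂^2*(w₃:ℂ) + 1*x₁*w₁^2*w₂^2*(s:ℂ)) * hg2c +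
        (-1*x₂*z₁*w₁^2*w₂ + -1*x₁*z₂*w₁*w₂^2 + -1*z₁*z₂*w₁*w₂*(w₃:ℂ) + (-1/4)*x₂*z₁*w₁*(w₃:ℂ)^2 + (-1/4)*x₁*z₂*w₂*(w₃:ℂ)^2 + (-1/4)*z₁*z₂*(w₃:ℂ)^3 + -1*z₂*w₁^2*w₂*(s:ℂ) + -1*z₁*w₁*w₂^2*(s:ℂ) + (-1/2)*x₂*w₁^2*(w₃:ℂ)*(s:ℂ) + (-1/2)*x₁*w₂^2*(w₃:ℂ)*(s:ℂ) + (-1/2)*z₂*w₁*(w₃:ℂ)^2*(s:ℂ) + (-1/2)*z₁*w₂*(w₃:ℂ)^2*(s:ℂ) + -1*w₁*w₂*(w₃:ℂ)*(s:ℂ)^2) * hF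
  have key3 := (mul_eq_zero.mp key3W).resolve_left (pow_ne_zero 2 hw)
  -- cast lemmas
  have hreC : ∀ u : ℂ, (u.re : ℂ) = (u + (starRingEnd ℂ) u)/2 := fun u => by
    rw [Complex.add_conj]; push_cast; ring
  have himC : ∀ u : ℂ, (u.im : ℂ) = -Complex.I * (u - (starRingEnd ℂ) u)/2 := fun u => by
    rw [Complex.sub_conj]; push_cast
    linear_combination (u.im:ℂ) * Complex.I_sq
  have hω₁C : (ω₁:ℂ) = (w₁+w₂)/2 := by rw [hω₁, hreC, ← hw₂]
  have hω₂C : (ω₂:ℂ) = -Complex.I*(w₁-w₂)/2 := by rw [hω₂, himC, ← hw₂]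
  have hα₁C : (α₁:ℂ) = (x₁+y₁+x₂+y₂)/4 := by
    rw [hα₁, hreC, hx₂, hy₂, map_div₀, map_add, map_ofNat]; ring
  have hα₂C : (α₂:ℂ) = -Complex.I*((x₁+y₁) - (x₂+y₂))/4 := by
    rw [hα₂, himC, hx₂, hy₂, map_div₀, map_add, map_ofNat]; ring
  have hα₃C : (α₃:ℂ) = (z₁+z₂)/2 := by rw [hα₃, hreC, ← hz₂]
  have hβ₁C : (β₁:ℂ) = Complex.I*((y₁-x₁) - (y₂-x₂))/4 := by
    rw [hβ₁]; push_cast [himC, hx₂, hy₂, map_div₀, map_sub, map_ofNat]; ring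
  have hβ₂C : (β₂:ℂ) = ((y₁-x₁) + (y₂-x₂))/4 := by
    rw [hβ₂, hreC, hx₂, hy₂, map_div₀, map_sub, map_ofNat]; ring
  have hβ₃C : (β₃:ℂ) = -Complex.I*(z₁-z₂)/2 := by rw [hβ₃, himC, ← hz₂]
  have hMγC : (Mγ:ℂ) = (2*w₁*(x₂*z₁ - y₂*z₂) + 2*w₂*(x₁*z₂ - y₁*z₁) + (w₃:ℂ)*(y₁*y₂ - x₁*x₂))/4 := by
    have hM := congrArg (fun r : ℝ => (r:ℂ)) hMγ
    push_cast at hM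
    rw [hω₁C, hω₂C, hω₃, hα₁C, hα₂C, hα₃C, hβ₁C, hβ₂C, hβ₃C] at hM
    push_cast at hM
    linear_combination hM + ((1/8)*x₁*z₁*w₁ + (-3/8)*x₂*z₁*w₁ + (-1/8)*y₁*z₁*w₁ + (-1/8)*y₂*z₁*w₁ + (1/8)*x₁*z₂*w₁ + (1/8)*x₂*z₂*w₁ + (-1/8)*y₁*z₂*w₁ + (3/8)*y₂*z₂*w₁ + (1/8)*x₁*z₁*w₂ + (1/8)*x₂*z₁*w₂ + (3/8)*y₁*z₁*w₂ + (-1/8)*y₂*z₁*w₂ + (-3/8)*x₁*z₂*w₂ + (1/8)*x₂*z₂*w₂ + (-1/8)*y₁*z₂*w₂ + (-1/8)*y₂*z₂*w₂ + (-1/16)*x₁^2*(w₃:ℂ) + (1/8)*x₁*x₂*(w₃:ℂ) + (-1/16)*x₂^2*(w₃:ℂ) + (1/16)*y₁^2*(w₃:ℂ) + (-1/8)*y₁*y₂*(w₃:ℂ) + (1/16)*y₂^2*(w₃:ℂ)) * Complex.I_sq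
  refine ⟨?_, ?_, ?_⟩
  · push_cast
    field_simp
    linear_combination key1
  · push_cast
    field_simp
    linear_combination key2
  · push_cast
    rw [hMγC, hα₁C, hβ₂C,
      show (x₁ * w₂ + y₂ * w₁ + z₁ * (w₃:ℂ)) * (x₂ * w₁ + y₁ * w₂ + z₂ * (w₃:ℂ))
        = 4*(s:ℂ)^2*(w₁*w₂) from by
          linear_combination (x₂*w₁ + y₁*w₂ + z₂*(w₃:ℂ))*h4 + (-2*(s:ℂ)*w₁)*h5]
    field_simp
    linear_combination 2*key3
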